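/- In the setting P(X = -3) = P(X = 1) = 1/2 with i.i.d. copies X_1, X_2, ..., and α_1, α_2 = ᾱ_1 the roots of s³ - s² - s - 1 = 0 inside the unit disk, one has F_∞(-3) = α_1α_2/((α_1-1)(α_2-1)), F_∞(-2) = -(α_1+α_2)/((α_1-1)(α_2-1)), and F_∞(-1) = 1/((α_1-1)(α_2-1)). -/

import Mathlib

open MeasureTheory ProbabilityTheory Filter Topology Finset ENNReal

namespace RWAux



def stepv (e : Bool) : ℤ := if e then 1 else -3

def evx {n : ℕ} (ε : Fin n → Bool) (j : ℕ) : ℤ :=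
  if h : j < n then stepv (ε ⟨j, h⟩) else 0

def psum {n : ℕ} (ε : Fin n → Bool) (k : ℕ) : ℤ :=
  ∑ j ∈ Finset.range (k + 1), evx ε j

def Aset (x : ℤ) (n : ℕ) : Finset (Fin n → Bool) :=
  Finset.univ.filter (fun ε => ∀ k < n, psum ε k ≤ x)

lemma mem_Aset {x : ℤ} {n : ℕ} {ε : Fin n → Bool} :
    ε ∈ Aset x n ↔ ∀ k < n, psum ε k ≤ x := by
  simp [Aset]

lemma evx_snoc {n : ℕ} (ε : Fin n → Bool) (e : Bool) {j : ℕ} (hj : j < n) :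
    evx (Fin.snoc ε e) j = evx ε j := by
  have hj' : j < n + 1 := Nat.lt_succ_of_lt hj
  have h2 : (⟨j, hj'⟩ : Fin (n + 1)) = Fin.castSucc ⟨j, hj⟩ := rfl
  rw [evx, evx, dif_pos hj', dif_pos hj, h2, Fin.snoc_castSucc]

lemma evx_snoc_last {n : ℕ} (ε : Fin n → Bool) (e : Bool) :
    evx (Fin.snoc ε e) n = stepv e := by
  have h : n < n + 1 := Nat.lt_succ_self n
  have h2 : (⟨n, h⟩ : Fin (n + 1)) = Fin.last n := rfl
  rw [evx, dif_pos h, h2, Fin.snoc_last]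

lemma psum_snoc {n : ℕ} (ε : Fin n → Bool) (e : Bool) {k : ℕ} (hk : k < n) :
    psum (Fin.snoc ε e) k = psum ε k := by
  refine Finset.sum_congr rfl fun j hj => ?_
  rw [Finset.mem_range] at hj
  exact evx_snoc ε e (lt_of_lt_of_le hj hk)

lemma psum_snoc_top {n : ℕ} (ε : Fin (n + 1) → Bool) (e : Bool) :
    psum (Fin.snoc ε e) (n + 1) = psum ε n + stepv e := by
  rw [psum, Finset.sum_range_succ]
  congr 1
  · exact Finset.sum_congr rfl fun j hj => by
      rw [Finset.mem_range] at hj; exact evx_snoc ε e hj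
  · exact evx_snoc_last ε e

lemma mem_Aset_snoc {x : ℤ} {n : ℕ} {ε : Fin (n + 1) → Bool} {e : Bool} :
    Fin.snoc ε e ∈ Aset x (n + 2) ↔ ε ∈ Aset x (n + 1) ∧ psum ε n + stepv e ≤ x := by
  simp only [mem_Aset]
  constructor
  · intro h
    refine ⟨fun k hk => ?_, ?_⟩
    · rw [← psum_snoc ε e hk]; exact h k (by omega)
    · rw [← psum_snoc_top ε e]; exact h (n + 1) (by omega)
  · rintro ⟨h1, h2⟩ k hk
    rcases Nat.lt_or_ge k (n + 1) with hk' | hk'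
    · rw [psum_snoc ε e hk']; exact h1 k hk'
    · have : k = n + 1 := by omega
      subst this; rw [psum_snoc_top ε e]; exact h2



lemma sum_split {n : ℕ} (f : (Fin (n + 2) → Bool) → ℝ) :
    ∑ ε' : Fin (n + 2) → Bool, f ε' =
      ∑ ε : Fin (n + 1) → Bool, ∑ e : Bool, f (Fin.snoc ε e) := by
  rw [← Equiv.sum_comp (Fin.snocEquiv (fun _ => Bool)) f, Fintype.sum_prod_type]
  rw [Finset.sum_comm]
  rfl

lemma sum_Aset_succ {n : ℕ} (x : ℤ) (g : ℤ → ℝ) :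
    ∑ ε' ∈ Aset x (n + 2), g (psum ε' (n + 1)) =
      ∑ ε ∈ Aset x (n + 1),
        (g (psum ε n - 3) + if psum ε n = x then 0 else g (psum ε n + 1)) := by
  rw [Aset, Aset, Finset.sum_filter, Finset.sum_filter]
  rw [show (∑ ε' : Fin (n+2) → Bool, if (∀ k < n+2, psum ε' k ≤ x) then g (psum ε' (n+1)) else 0)
      = ∑ ε : Fin (n+1) → Bool, ∑ e : Bool,
          (if (∀ k < n+2, psum (Fin.snoc ε e) k ≤ x) then g (psum (Fin.snoc ε e) (n+1)) else 0)
    from sum_split _]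
  refine Finset.sum_congr rfl fun ε _ => ?_
  rw [Fintype.sum_bool]
  have ht := psum_snoc_top ε true
  have hf := psum_snoc_top ε false
  have mt : (∀ k < n + 2, psum (Fin.snoc ε true) k ≤ x) ↔
      ((∀ k < n + 1, psum ε k ≤ x) ∧ psum ε n + 1 ≤ x) := by
    have := @mem_Aset_snoc x n ε true
    simpa [mem_Aset, stepv] using this
  have mf : (∀ k < n + 2, psum (Fin.snoc ε false) k ≤ x) ↔
      ((∀ k < n + 1, psum ε k ≤ x) ∧ psum ε n - 3 ≤ x) := by
    have := @mem_Aset_snoc x n ε false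
    simpa [mem_Aset, stepv, sub_eq_add_neg] using this
  rw [if_congr mt rfl rfl, if_congr mf rfl rfl, ht, hf]
  have e1 : psum ε n + stepv true = psum ε n + 1 := by simp [stepv]
  have e2 : psum ε n + stepv false = psum ε n - 3 := by simp [stepv]; ring
  rw [e1, e2]
  by_cases h1 : ∀ k < n + 1, psum ε k ≤ x
  · have hle : psum ε n ≤ x := h1 n (Nat.lt_succ_self n)
    by_cases h2 : psum ε n = x
    · have hnot : ¬ (psum ε n + 1 ≤ x) := by omega
      rw [if_neg (fun hc => hnot hc.2), if_pos ⟨h1, by omega⟩, if_pos h1, if_pos h2]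
      ring
    · have hyes : psum ε n + 1 ≤ x := by omega
      have h3 : psum ε n - 3 ≤ x := by omega
      rw [if_pos ⟨h1, hyes⟩, if_pos ⟨h1, h3⟩, if_pos h1, if_neg h2]
      ring
  · rw [if_neg (fun hc => h1 hc.1), if_neg (fun hc => h1 hc.1), if_neg h1]
    ring

lemma sum_univ_succ {n : ℕ} (g : ℤ → ℝ) :
    ∑ ε' : Fin (n + 2) → Bool, g (psum ε' (n + 1)) =
      ∑ ε : Fin (n + 1) → Bool, (g (psum ε n + 1) + g (psum ε n - 3)) := by
  rw [sum_split]
  refine Finset.sum_congr rfl fun ε _ => ?_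
  rw [Fintype.sum_bool, psum_snoc_top, psum_snoc_top]
  simp [stepv, sub_eq_add_neg]


lemma psum_one (ε : Fin 1 → Bool) : psum ε 0 = stepv (ε 0) := by
  have : evx ε 0 = stepv (ε 0) := by
    rw [evx, dif_pos Nat.zero_lt_one]; rfl
  simp [psum, this]

lemma Aset_one {x : ℤ} (hx1 : -3 ≤ x) (hx2 : x ≤ -1) :
    Aset x 1 = {fun _ => false} := by
  ext ε
  simp only [mem_Aset, Finset.mem_singleton]
  constructor
  · intro h
    have h0 := h 0 Nat.zero_lt_one
    rw [psum_one] at h0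
    funext j
    have hj : j = 0 := Subsingleton.elim _ _
    subst hj
    cases hε : ε 0 with
    | false => rfl
    | true => rw [hε] at h0; simp [stepv] at h0; omega
  · rintro rfl k hk
    have hk0 : k = 0 := by omega
    subst hk0
    rw [psum_one]
    simp [stepv]
    omega

lemma sum_univ_pow : ∀ n : ℕ,
    ∑ ε : Fin (n + 1) → Bool, ((3:ℝ)/2) ^ (psum ε n) = (97/54 : ℝ) ^ (n + 1) := by
  intro n
  induction n with
  | zero =>
      rw [← Equiv.sum_comp (Equiv.funUnique (Fin 1) Bool).symm
        (fun ε => ((3:ℝ)/2) ^ (psum ε 0)), Fintype.sum_bool]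
      have ht : ((Equiv.funUnique (Fin 1) Bool).symm true) = fun _ => true := rfl
      have hf : ((Equiv.funUnique (Fin 1) Bool).symm false) = fun _ => false := rfl
      rw [ht, hf, psum_one, psum_one]
      norm_num [stepv]
  | succ n ih =>
      rw [sum_univ_succ (fun s => ((3:ℝ)/2) ^ s)]
      have hpt : ∀ s : ℤ, ((3:ℝ)/2) ^ (s + 1) + ((3:ℝ)/2) ^ (s - 3)
          = (97/54) * ((3:ℝ)/2) ^ s := by
        intro s
        have h0 : ((3:ℝ)/2) ≠ 0 := by norm_num
        rw [zpow_add₀ h0, zpow_sub₀ h0]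
        norm_num
        ring
      simp only [hpt]
      rw [← Finset.mul_sum, ih, pow_succ]
      ring
lemma sum_bound {x : ℤ} (hx2 : x ≤ -1) {b : ℝ} (hb32 : (3:ℝ)/2 ≤ b) (n : ℕ) :
    ∑ ε ∈ Aset x (n + 1), b ^ (psum ε n) ≤ (97/54 : ℝ) ^ (n + 1) := by
  calc ∑ ε ∈ Aset x (n + 1), b ^ (psum ε n)
      ≤ ∑ ε ∈ Aset x (n + 1), ((3:ℝ)/2) ^ (psum ε n) := by
        refine Finset.sum_le_sum fun ε hε => ?_
        have hs : psum ε n ≤ x := (mem_Aset.mp hε) n (Nat.lt_succ_self n)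
        have hsneg : psum ε n ≤ 0 := by omega
        have h1 : (b / ((3:ℝ)/2)) ^ (psum ε n) ≤ 1 :=
          zpow_le_one_of_nonpos₀ ((one_le_div (by norm_num)).2 hb32) hsneg
        rw [div_zpow] at h1
        have hpos : (0:ℝ) < ((3:ℝ)/2) ^ (psum ε n) := zpow_pos (by norm_num) _
        calc b ^ psum ε n
            = (b ^ psum ε n / ((3/2:ℝ)) ^ psum ε n) * ((3/2:ℝ)) ^ psum ε n := by
              field_simp
          _ ≤ 1 * ((3/2:ℝ)) ^ psum ε n := mul_le_mul_of_nonneg_right h1 (le_of_lt hpos)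
          _ = ((3:ℝ)/2) ^ psum ε n := by norm_num
    _ ≤ ∑ ε : Fin (n + 1) → Bool, ((3:ℝ)/2) ^ (psum ε n) :=
        Finset.sum_le_sum_of_subset_of_nonneg (Finset.subset_univ _)
          (fun ε _ _ => le_of_lt (zpow_pos (by norm_num) _))
    _ = (97/54 : ℝ) ^ (n + 1) := sum_univ_pow n

lemma sum_nonneg' {x : ℤ} {b : ℝ} (hb0 : 0 < b) (n : ℕ) :
    0 ≤ ∑ ε ∈ Aset x (n + 1), b ^ (psum ε n) :=
  Finset.sum_nonneg fun ε _ => le_of_lt (zpow_pos hb0 _)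


variable {Ω : Type*} [MeasurableSpace Ω] (μ : Measure Ω) [IsProbabilityMeasure μ]
  (X : ℕ → Ω → ℤ)

lemma meas_eq (hmeas : ∀ k, Measurable (X k))
    (hindep : iIndepFun X μ)
    (hlaw1 : ∀ k, μ {ω | X k ω = -3} = 1 / 2)
    (hlaw2 : ∀ k, μ {ω | X k ω = 1} = 1 / 2)
    (n : ℕ) (x : ℤ) :
    μ {ω | ∀ k ≤ n, ∑ j ∈ Finset.range (k + 1), X j ω ≤ x}
      = ((Aset x (n + 1)).card : ℝ≥0∞) * (1 / 2) ^ (n + 1) := by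
  classical
  set E : Set Ω := {ω | ∀ k ≤ n, ∑ j ∈ Finset.range (k + 1), X j ω ≤ x} with hE
  set G : Set Ω := ⋂ j ∈ Finset.range (n + 1), ({ω | X j ω = -3} ∪ {ω | X j ω = 1})
    with hG
  have hsetm : ∀ (j : ℕ) (c : ℤ), MeasurableSet {ω | X j ω = c} := fun j c =>
    hmeas j (measurableSet_singleton c)
  have hGmeas : MeasurableSet G :=
    Finset.measurableSet_biInter _ fun j _ => ((hsetm j (-3)).union (hsetm j 1))
  -- complement of G is null
  have hGc : μ Gᶜ = 0 := by
    have hone : ∀ j : ℕ, μ ({ω | X j ω = -3} ∪ {ω | X j ω = 1}) = 1 := by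
      intro j
      rw [measure_union _ (hsetm j 1), hlaw1 j, hlaw2 j]
      · rw [ENNReal.div_add_div_same]
        have : (2:ℝ≥0∞) / 2 = 1 := ENNReal.div_self (by norm_num) (by norm_num)
        convert this using 2
        norm_num
      · rw [Set.disjoint_left]
        rintro ω h3 h1
        rw [Set.mem_setOf_eq] at h3 h1
        omega
    have : Gᶜ = ⋃ j ∈ Finset.range (n + 1), ({ω | X j ω = -3} ∪ {ω | X j ω = 1})ᶜ := by
      rw [hG, Set.compl_iInter₂]
    rw [this]
    refine le_antisymm (le_trans (measure_biUnion_finset_le _ _) ?_) (zero_le)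
    have hz : ∀ j ∈ Finset.range (n + 1),
        μ (({ω | X j ω = -3} ∪ {ω | X j ω = 1})ᶜ) = 0 := by
      intro j _
      rw [measure_compl ((hsetm j (-3)).union (hsetm j 1)) (measure_ne_top μ _), hone j,
        measure_univ, tsub_self]
    rw [Finset.sum_congr rfl hz]
    simp
  -- atoms
  set atom : (Fin (n + 1) → Bool) → Set Ω :=
    fun ε => ⋂ j ∈ Finset.range (n + 1), X j ⁻¹' {evx ε j} with hatom
  have hatomm : ∀ ε, MeasurableSet (atom ε) := fun ε =>
    Finset.measurableSet_biInter _ fun j _ => hmeas j (measurableSet_singleton _)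
  have meas_atom : ∀ ε : Fin (n + 1) → Bool, μ (atom ε) = (1 / 2) ^ (n + 1) := by
    intro ε
    rw [hatom]
    rw [hindep.measure_inter_preimage_eq_mul (Finset.range (n + 1))
      (fun j _ => measurableSet_singleton _)]
    have hhalf : ∀ j ∈ Finset.range (n + 1), μ (X j ⁻¹' {evx ε j}) = 1 / 2 := by
      intro j hj
      rw [Finset.mem_range] at hj
      have hval : evx ε j = stepv (ε ⟨j, hj⟩) := by rw [evx, dif_pos hj]
      have hpre : ∀ c : ℤ, X j ⁻¹' {c} = {ω | X j ω = c} := by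
        intro c; ext ω; simp
      rw [hval]
      cases hb : ε ⟨j, hj⟩ with
      | true => rw [show stepv true = 1 from rfl, hpre]; exact hlaw2 j
      | false => rw [show stepv false = -3 from rfl, hpre]; exact hlaw1 j
    rw [Finset.prod_congr rfl hhalf, Finset.prod_const, Finset.card_range]
  -- key pointwise fact
  have hsum_eq : ∀ (ω : Ω) (ε : Fin (n + 1) → Bool),
      (∀ j < n + 1, X j ω = evx ε j) →
      ∀ k ≤ n, ∑ j ∈ Finset.range (k + 1), X j ω = psum ε k := by
    intro ω ε h k hk
    refine Finset.sum_congr rfl fun j hj => ?_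
    rw [Finset.mem_range] at hj
    exact h j (by omega)
  -- E ∩ G = union of atoms
  have hEG : E ∩ G = ⋃ ε ∈ Aset x (n + 1), atom ε := by
    ext ω
    constructor
    · rintro ⟨hωE, hωG⟩
      rw [hG, Set.mem_iInter₂] at hωG
      set ε : Fin (n + 1) → Bool := fun j => decide (X j ω = 1) with hε
      have hXval : ∀ j < n + 1, X j ω = evx ε j := by
        intro j hj
        have hd := hωG j (Finset.mem_range.mpr hj)
        have hval : evx ε j = stepv (ε ⟨j, hj⟩) := by rw [evx, dif_pos hj]
        rw [hval, hε]
        rcases hd with hd | hd <;> rw [Set.mem_setOf_eq] at hd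
        · have : ¬ (X j ω = 1) := by omega
          simp [this, stepv, hd]
        · simp [hd, stepv]
      rw [Set.mem_iUnion₂]
      refine ⟨ε, ?_, ?_⟩
      · rw [mem_Aset]
        intro k hk
        rw [← hsum_eq ω ε hXval k (by omega)]
        exact hωE k (by omega)
      · rw [hatom, Set.mem_iInter₂]
        intro j hj
        rw [Finset.mem_range] at hj
        simp only [Set.mem_preimage, Set.mem_singleton_iff]
        exact hXval j hj
    · intro hω
      rw [Set.mem_iUnion₂] at hω
      obtain ⟨ε, hεA, hωa⟩ := hω
      rw [hatom, Set.mem_iInter₂] at hωa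
      have hXval : ∀ j < n + 1, X j ω = evx ε j := by
        intro j hj
        have := hωa j (Finset.mem_range.mpr hj)
        simpa using this
      constructor
      · intro k hk
        rw [hsum_eq ω ε hXval k hk]
        exact (mem_Aset.mp hεA) k (by omega)
      · rw [hG, Set.mem_iInter₂]
        intro j hj
        rw [Finset.mem_range] at hj
        have hv := hXval j hj
        have hval : evx ε j = stepv (ε ⟨j, hj⟩) := by rw [evx, dif_pos hj]
        rw [hval] at hv
        cases hb : ε ⟨j, hj⟩ with
        | true => right; rw [Set.mem_setOf_eq, hv, hb]; rfl
        | false => left; rw [Set.mem_setOf_eq, hv, hb]; rfl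
  -- atoms pairwise disjoint
  have hdisj : (↑(Aset x (n + 1)) : Set (Fin (n + 1) → Bool)).PairwiseDisjoint atom := by
    intro ε _ ε' _ hne
    rw [Function.onFun, Set.disjoint_left]
    intro ω hω hω'
    rw [hatom, Set.mem_iInter₂] at hω hω'
    apply hne
    funext j
    have h1 := hω j (Finset.mem_range.mpr j.isLt)
    have h2 := hω' j (Finset.mem_range.mpr j.isLt)
    simp only [Set.mem_preimage, Set.mem_singleton_iff] at h1 h2
    have hval : evx ε (j : ℕ) = stepv (ε j) := by
      rw [evx, dif_pos j.isLt]
    have hval' : evx ε' (j : ℕ) = stepv (ε' j) := by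
      rw [evx, dif_pos j.isLt]
    rw [hval] at h1; rw [hval'] at h2
    have : stepv (ε j) = stepv (ε' j) := by rw [← h1, ← h2]
    cases hb : ε j <;> cases hb' : ε' j <;> rw [hb, hb'] at this <;>
      first | rfl | (exfalso; simp [stepv] at this)
  -- conclude
  have hEfull : μ E = μ (E ∩ G) := by
    refine le_antisymm ?_ (measure_mono Set.inter_subset_left)
    have hsub : E ⊆ (E ∩ G) ∪ Gᶜ := by
      intro ω hω
      by_cases hg : ω ∈ G
      · exact Or.inl ⟨hω, hg⟩
      · exact Or.inr hg
    calc μ E ≤ μ ((E ∩ G) ∪ Gᶜ) := measure_mono hsub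
      _ ≤ μ (E ∩ G) + μ Gᶜ := measure_union_le _ _
      _ = μ (E ∩ G) := by rw [hGc, add_zero]
  rw [hEfull, hEG, measure_biUnion_finset hdisj fun ε _ => hatomm ε]
  rw [Finset.sum_congr rfl fun ε _ => meas_atom ε, Finset.sum_const, nsmul_eq_mul]

lemma roots_facts {α₁ α₂ : ℂ}
    (hroot1 : α₁ ^ 3 - α₁ ^ 2 - α₁ - 1 = 0)
    (hroot2 : α₂ ^ 3 - α₂ ^ 2 - α₂ - 1 = 0)
    (hconj : α₂ = starRingEnd ℂ α₁) (hne : α₁ ≠ α₂)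
    (h1 : ‖α₁‖ < 1) :
    ∃ b : ℝ, (b : ℂ) = 1 - α₁ - α₂ ∧ α₁ * α₂ * (b : ℂ) = 1 ∧
      b ^ 3 = b ^ 2 + b + 1 ∧ (3:ℝ)/2 ≤ b := by
  have hd : α₁ - α₂ ≠ 0 := sub_ne_zero.mpr hne
  have hR1 : α₁ ^ 2 + α₁ * α₂ + α₂ ^ 2 - α₁ - α₂ - 1 = 0 := by
    apply mul_left_cancel₀ hd
    rw [mul_zero]
    linear_combination hroot1 - hroot2
  have he2g : α₁ * α₂ * (1 - α₁ - α₂) = 1 := by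
    linear_combination hroot1 - α₁ * hR1
  have hcubic : (1 - α₁ - α₂) ^ 3 - (1 - α₁ - α₂) ^ 2 - (1 - α₁ - α₂) - 1 = 0 := by
    linear_combination (1 - α₁ - α₂) * hR1 + he2g
  -- 1 - α₁ - α₂ is real
  have hγreal : ((1 - α₁ - α₂).re : ℂ) = 1 - α₁ - α₂ := by
    rw [hconj]
    apply Complex.ext <;> simp
  set b : ℝ := (1 - α₁ - α₂).re with hb
  refine ⟨b, hγreal, ?_, ?_, ?_⟩
  · rw [hγreal]; exact he2g
  · have : ((b ^ 3 - b ^ 2 - b - 1 : ℝ) : ℂ) = 0 := by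
      push_cast
      rw [hγreal]
      linear_combination hcubic
    have hr : b ^ 3 - b ^ 2 - b - 1 = 0 := by exact_mod_cast this
    linarith
  · -- b > 0 : α₁ * α₂ = normSq α₁ ∈ (0,1), and b = 1 / (α₁α₂)
    have hα0 : α₁ ≠ 0 := by
      intro h
      rw [h] at hroot1
      norm_num at hroot1
    have hprod : α₁ * α₂ = (Complex.normSq α₁ : ℂ) := by
      rw [hconj, Complex.mul_conj]
    have hn0 : 0 < Complex.normSq α₁ := Complex.normSq_pos.mpr hα0
    have hbval : (Complex.normSq α₁ : ℂ) * (b : ℂ) = 1 := by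
      rw [← hprod, hγreal]; exact he2g
    have hbval' : (Complex.normSq α₁ : ℝ) * b = 1 := by
      exact_mod_cast hbval
    have hbpos : 0 < b := by
      rcases lt_trichotomy b 0 with h | h | h
      · nlinarith
      · rw [h] at hbval'; norm_num at hbval'
      · exact h
    have hb3 : b ^ 3 = b ^ 2 + b + 1 := by
      have : ((b ^ 3 - b ^ 2 - b - 1 : ℝ) : ℂ) = 0 := by
        push_cast
        rw [hγreal]
        linear_combination hcubic
      have hr : b ^ 3 - b ^ 2 - b - 1 = 0 := by exact_mod_cast this
      linarith
    nlinarith [hb3, hbpos, sq_nonneg b, sq_nonneg (b - 1)]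



lemma invariant {x : ℤ} (hx1 : -3 ≤ x) (hx2 : x ≤ -1) {b : ℝ}
    (hb2 : ∀ s : ℤ, b ^ (s + 1) + b ^ (s - 3) = 2 * b ^ s) :
    ∀ n : ℕ, b ^ (x + 1) * (2 ^ n - ((Aset x (n + 1)).card : ℝ)) + b * 2 ^ n
      + ∑ ε ∈ Aset x (n + 1), b ^ (psum ε n) = 2 ^ (n + 1) := by
  intro n
  induction n with
  | zero =>
      rw [Aset_one hx1 hx2]
      have h0 := hb2 0
      rw [zpow_zero] at h0
      simp only [Finset.card_singleton, Finset.sum_singleton, psum_one]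
      have : stepv false = -3 := rfl
      rw [this]
      have h1 : b ^ (0 + 1 : ℤ) = b ^ (1 : ℤ) := by norm_num
      have h2 : b ^ (0 - 3 : ℤ) = b ^ (-3 : ℤ) := by norm_num
      rw [h1, h2, zpow_one] at h0
      push_cast
      nlinarith [h0]
  | succ n ih =>
      set M : ℝ := ∑ ε ∈ Aset x (n + 1), (if psum ε n = x then (1:ℝ) else 0) with hM
      have cardC : ((Aset x (n + 2)).card : ℝ)
          = 2 * ((Aset x (n + 1)).card : ℝ) - M := by
        have h1 : ((Aset x (n + 2)).card : ℝ)
            = ∑ ε' ∈ Aset x (n + 2), (fun _ : ℤ => (1:ℝ)) (psum ε' (n + 1)) := by simp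
        rw [h1, sum_Aset_succ x (fun _ => (1:ℝ))]
        have h2 : (2 * ((Aset x (n + 1)).card : ℝ) : ℝ)
            = ∑ ε ∈ Aset x (n + 1), (2:ℝ) := by
          rw [Finset.sum_const]; simp; ring
        rw [h2, hM, ← Finset.sum_sub_distrib]
        refine Finset.sum_congr rfl fun ε _ => ?_
        by_cases h : psum ε n = x <;> simp [h] <;> norm_num
      have sumC : ∑ ε' ∈ Aset x (n + 2), b ^ (psum ε' (n + 1))
          = 2 * (∑ ε ∈ Aset x (n + 1), b ^ (psum ε n)) - b ^ (x + 1) * M := by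
        rw [sum_Aset_succ x (fun s => b ^ s), hM, Finset.mul_sum, Finset.mul_sum,
          ← Finset.sum_sub_distrib]
        refine Finset.sum_congr rfl fun ε _ => ?_
        by_cases h : psum ε n = x
        · have := hb2 x
          simp only [h, if_pos]
          simp
          linarith
        · have := hb2 (psum ε n)
          simp only [h, if_neg, not_false_iff]
          simp [h]
          linarith
      rw [cardC, sumC]
      have : (2:ℝ) ^ (n + 1) = 2 * 2 ^ n := by ring
      rw [this]
      have h2 : (2:ℝ) ^ (n + 2) = 2 * 2 ^ (n + 1) := by ring
      rw [h2, ← ih]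
      ring

lemma hb2_of (b : ℝ) (hbne : b ≠ 0) (hb3 : b ^ 3 = b ^ 2 + b + 1) :
    ∀ s : ℤ, b ^ (s + 1) + b ^ (s - 3) = 2 * b ^ s := by
  intro s
  have h4 : b ^ (s + 1) = b ^ (s - 3) * b ^ (4 : ℤ) := by
    rw [← zpow_add₀ hbne]; ring_nf
  have h3 : b ^ s = b ^ (s - 3) * b ^ (3 : ℤ) := by
    rw [← zpow_add₀ hbne]; ring_nf
  have e4 : b ^ (4 : ℤ) = b ^ (4 : ℕ) := by
    rw [show ((4:ℤ)) = ((4:ℕ):ℤ) by norm_num, zpow_natCast]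
  have e3 : b ^ (3 : ℤ) = b ^ (3 : ℕ) := by
    rw [show ((3:ℤ)) = ((3:ℕ):ℤ) by norm_num, zpow_natCast]
  have h43 : b ^ (4 : ℤ) + 1 = 2 * b ^ (3 : ℤ) := by
    rw [e4, e3]; linear_combination (b - 1) * hb3
  rw [h4, h3]
  linear_combination (b ^ (s - 3)) * h43

lemma tendsto_P {x : ℤ} (hx1 : -3 ≤ x) (hx2 : x ≤ -1) {b : ℝ} (hb32 : (3:ℝ)/2 ≤ b)
    (hb3 : b ^ 3 = b ^ 2 + b + 1) :
    Tendsto (fun n : ℕ => ((Aset x (n + 1)).card : ℝ) / 2 ^ (n + 1)) atTop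
      (𝓝 (1/2 - (1 - b/2) * b ^ (-(x + 1)))) := by
  have hb0 : (0:ℝ) < b := by linarith
  have hbne : b ≠ 0 := ne_of_gt hb0
  have hb2 := hb2_of b hbne hb3
  have hU : Tendsto (fun n : ℕ =>
      (∑ ε ∈ Aset x (n + 1), b ^ psum ε n) / 2 ^ (n + 1)) atTop (𝓝 0) := by
    have hup : ∀ n : ℕ, (∑ ε ∈ Aset x (n + 1), b ^ psum ε n) / 2 ^ (n + 1)
        ≤ (97/108 : ℝ) ^ (n + 1) := by
      intro n
      have h1 := sum_bound hx2 hb32 n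
      have h2 : ((97:ℝ)/54) ^ (n + 1) / 2 ^ (n + 1) = (97/108 : ℝ) ^ (n + 1) := by
        rw [div_eq_iff (by positivity : ((2:ℝ))^(n+1) ≠ 0), ← mul_pow]
        norm_num
      rw [← h2]
      gcongr
    have hlow : ∀ n : ℕ, 0 ≤ (∑ ε ∈ Aset x (n + 1), b ^ psum ε n) / 2 ^ (n + 1) :=
      fun n => div_nonneg (sum_nonneg' hb0 n) (by positivity)
    have hgeo : Tendsto (fun n : ℕ => (97/108 : ℝ) ^ (n + 1)) atTop (𝓝 0) := by
      have h := tendsto_pow_atTop_nhds_zero_of_lt_one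
        (by norm_num : (0:ℝ) ≤ 97/108) (by norm_num : (97/108 : ℝ) < 1)
      exact h.comp (tendsto_add_atTop_nat 1)
    exact tendsto_of_tendsto_of_tendsto_of_le_of_le tendsto_const_nhds hgeo hlow hup
  have hPn : ∀ n : ℕ, ((Aset x (n + 1)).card : ℝ) / 2 ^ (n + 1)
      = 1/2 - (1 - b/2 - (∑ ε ∈ Aset x (n + 1), b ^ psum ε n) / 2 ^ (n + 1))
          * b ^ (-(x + 1)) := by
    intro n
    have hinv := invariant hx1 hx2 hb2 n
    have h2p : ((2:ℝ) ^ (n + 1)) ≠ 0 := by positivity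
    have hbinv : b ^ (-(x + 1)) * b ^ (x + 1) = 1 := by
      rw [← zpow_add₀ hbne, show -(x + 1) + (x + 1) = 0 by ring, zpow_zero]
    have e1 : b ^ (x + 1) * ((2:ℝ) ^ n - ((Aset x (n + 1)).card : ℝ))
        = 2 ^ (n + 1) - b * 2 ^ n - ∑ ε ∈ Aset x (n + 1), b ^ psum ε n := by
      linarith
    have e2 := congrArg (fun t => b ^ (-(x + 1)) * t) e1
    rw [← mul_assoc, hbinv, one_mul] at e2
    have e3 : ((Aset x (n + 1)).card : ℝ)
        = 2 ^ n - b ^ (-(x + 1)) * (2 ^ (n + 1) - b * 2 ^ n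
            - ∑ ε ∈ Aset x (n + 1), b ^ psum ε n) := by
      linarith
    rw [e3]
    have h2s : (2:ℝ) ^ (n + 1) = 2 * 2 ^ n := by ring
    field_simp
    ring
  rw [show (fun n : ℕ => ((Aset x (n + 1)).card : ℝ) / 2 ^ (n + 1))
      = fun n : ℕ => 1/2 - (1 - b/2 - (∑ ε ∈ Aset x (n + 1), b ^ psum ε n) / 2 ^ (n + 1))
          * b ^ (-(x + 1)) from funext hPn]
  have h : Tendsto (fun n : ℕ => 1/2 - (1 - b/2
        - (∑ ε ∈ Aset x (n + 1), b ^ psum ε n) / 2 ^ (n + 1)) * b ^ (-(x + 1)))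
      atTop (𝓝 (1/2 - (1 - b/2 - 0) * b ^ (-(x + 1)))) :=
    tendsto_const_nhds.sub ((tendsto_const_nhds.sub hU).mul tendsto_const_nhds)
  simpa using h

end RWAux

open RWAux

/-- Example: for i.i.d. `X_k` with `P(X = -3) = P(X = 1) = 1/2` and `α₁, α₂ = ᾱ₁` the
roots of `s³ - s² - s - 1 = 0` inside the unit disk,
`F_∞(-3) = α₁α₂/((α₁-1)(α₂-1))`, `F_∞(-2) = -(α₁+α₂)/((α₁-1)(α₂-1))`,
`F_∞(-1) = 1/((α₁-1)(α₂-1))`. -/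
theorem example_initial_values {Ω : Type*} [MeasurableSpace Ω] (μ : Measure Ω)
    [IsProbabilityMeasure μ]
    (X : ℕ → Ω → ℤ) (hmeas : ∀ k, Measurable (X k))
    (hindep : iIndepFun X μ)
    (hlaw1 : ∀ k, μ {ω | X k ω = -3} = 1 / 2)
    (hlaw2 : ∀ k, μ {ω | X k ω = 1} = 1 / 2)
    (α₁ α₂ : ℂ)
    (hroot1 : α₁ ^ 3 - α₁ ^ 2 - α₁ - 1 = 0)
    (hroot2 : α₂ ^ 3 - α₂ ^ 2 - α₂ - 1 = 0)
    (hconj : α₂ = starRingEnd ℂ α₁) (hne : α₁ ≠ α₂)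
    (h1 : ‖α₁‖ < 1) (h2 : ‖α₂‖ < 1)
    (F : ℤ → ℝ)
    (hF : ∀ x : ℤ, Tendsto
      (fun n => (μ {ω | ∀ k ≤ n, ∑ j ∈ Finset.range (k + 1), X j ω ≤ x}).toReal)
      atTop (𝓝 (F x))) :
    (F (-3) : ℂ) = α₁ * α₂ / ((α₁ - 1) * (α₂ - 1)) ∧
    (F (-2) : ℂ) = -(α₁ + α₂) / ((α₁ - 1) * (α₂ - 1)) ∧
    (F (-1) : ℂ) = 1 / ((α₁ - 1) * (α₂ - 1)) := by
  obtain ⟨b, hB, hP, hb3, hb32⟩ := roots_facts hroot1 hroot2 hconj hne h1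
  have hb0 : (0:ℝ) < b := by linarith
  have bridge : ∀ x : ℤ, -3 ≤ x → x ≤ -1 →
      F x = 1/2 - (1 - b/2) * b ^ (-(x + 1)) := by
    intro x hx1 hx2
    have hseq : ∀ n : ℕ,
        (μ {ω | ∀ k ≤ n, ∑ j ∈ Finset.range (k + 1), X j ω ≤ x}).toReal
          = ((Aset x (n + 1)).card : ℝ) / 2 ^ (n + 1) := by
      intro n
      rw [meas_eq μ X hmeas hindep hlaw1 hlaw2 n x]
      rw [ENNReal.toReal_mul, ENNReal.toReal_pow]
      have hhalf : ((1 / 2 : ℝ≥0∞)).toReal = (1 / 2 : ℝ) := by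
        rw [ENNReal.toReal_div]
        norm_num
      rw [hhalf, show ((((Aset x (n+1)).card : ℝ≥0∞)).toReal) = ((Aset x (n+1)).card : ℝ) by simp]
      rw [div_pow, one_pow, mul_one_div]
    have hlim := tendsto_P hx1 hx2 hb32 hb3
    have hlim' : Tendsto
        (fun n => (μ {ω | ∀ k ≤ n, ∑ j ∈ Finset.range (k + 1), X j ω ≤ x}).toReal)
        atTop (𝓝 (1/2 - (1 - b/2) * b ^ (-(x + 1)))) := by
      rw [show (fun n => (μ {ω | ∀ k ≤ n, ∑ j ∈ Finset.range (k + 1), X j ω ≤ x}).toReal)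
          = fun n : ℕ => ((Aset x (n + 1)).card : ℝ) / 2 ^ (n + 1) from funext hseq]
      exact hlim
    exact tendsto_nhds_unique (hF x) hlim'
  have hF3 : F (-3) = 1/2 - (1 - b/2) * b ^ 2 := by
    have h := bridge (-3) (by norm_num) (by norm_num)
    rw [h, show (-((-3:ℤ) + 1)) = ((2:ℕ) : ℤ) by norm_num, zpow_natCast]
  have hF2 : F (-2) = 1/2 - (1 - b/2) * b := by
    have h := bridge (-2) (by norm_num) (by norm_num)
    rw [h, show (-((-2:ℤ) + 1)) = ((1:ℕ) : ℤ) by norm_num, zpow_natCast, pow_one]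
  have hF1 : F (-1) = 1/2 - (1 - b/2) * 1 := by
    have h := bridge (-1) (by norm_num) (by norm_num)
    rw [h, show (-((-1:ℤ) + 1)) = (0 : ℤ) by norm_num, zpow_zero]
  have hα1ne1 : α₁ ≠ 1 := by
    intro h; rw [h] at h1; norm_num at h1
  have hα2ne1 : α₂ ≠ 1 := by
    intro h; rw [h] at h2; norm_num at h2
  have hden : (α₁ - 1) * (α₂ - 1) ≠ 0 :=
    mul_ne_zero (sub_ne_zero.mpr hα1ne1) (sub_ne_zero.mpr hα2ne1)
  have hBne : (b : ℂ) ≠ 0 := by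
    rw [Complex.ofReal_ne_zero]; linarith
  have hb3C : (b : ℂ) ^ 3 = (b : ℂ) ^ 2 + (b : ℂ) + 1 := by
    exact_mod_cast congrArg (fun t : ℝ => (t : ℂ)) hb3
  have hsum : α₁ + α₂ = 1 - (b : ℂ) := by linear_combination hB
  refine ⟨?_, ?_, ?_⟩
  · rw [hF3, eq_div_iff hden]
    push_cast
    apply mul_left_cancel₀ hBne
    linear_combination ((b:ℂ) * (-(1/2 - (1 - (b:ℂ)/2) * (b:ℂ)^2))) * hsum
      + ((1/2 - (1 - (b:ℂ)/2) * (b:ℂ)^2 - 1)) * hP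
      + (((b:ℂ)^2 - (b:ℂ) + 1)/2) * hb3C
  · rw [hF2, eq_div_iff hden]
    push_cast
    apply mul_left_cancel₀ hBne
    linear_combination ((b:ℂ) * (1 - (1/2 - (1 - (b:ℂ)/2) * (b:ℂ)))) * hsum
      + ((1/2 - (1 - (b:ℂ)/2) * (b:ℂ))) * hP
      + (((b:ℂ) - 1)/2) * hb3C
  · rw [hF1, eq_div_iff hden]
    push_cast
    apply mul_left_cancel₀ hBne
    linear_combination ((b:ℂ) * (-(1/2 - (1 - (b:ℂ)/2)))) * hsum
      + ((1/2 - (1 - (b:ℂ)/2))) * hP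
      + (1/2) * hb3C
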